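/- (Theorem 1, value formula.) Let K > 0, 0 ≤ t < T and S ∈ ℝ. Define the fluid-limit value ṽ(t,S) as the infimum over all measurable control functions b : [t,T] → [0,∞) of ( -λ ∫ₜ^T F(b(s)) ds + K·min( S - λ ∫ₜ^T G(b(s)) ds, 0)² ). Then ṽ(t,S) = sup over x ∈ (-∞,0] of ( S x - (T-t) H(x) - x²/(4K) ). -/

import Mathlib

open MeasureTheory Filter Set


private lemma aux_quad (K x y : ℝ) (hK : 0 < K) (hx : x ≤ 0) :
    x * y - x^2/(4*K) ≤ K * (min y 0)^2 := by
  rcases le_or_gt 0 y with hy | hy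
  · rw [min_eq_right hy]
    have h1 : x * y ≤ 0 := mul_nonpos_of_nonpos_of_nonneg hx hy
    have h2 : 0 ≤ x^2/(4*K) := by positivity
    nlinarith
  · rw [min_eq_left hy.le]
    have h4K : 0 < 4*K := by linarith
    rw [sub_le_iff_le_add, ← sub_le_iff_le_add', le_div_iff₀ h4K]
    nlinarith [sq_nonneg (2*K*y - x)]

private lemma aux_IBP (f F G : ℝ → ℝ) (hf_cont : Continuous f)
    (hF : ∀ b : ℝ, F b = ∫ p in (0 : ℝ)..b, f p)
    (hG : ∀ b : ℝ, G b = ∫ p in (0 : ℝ)..b, p * f p) (c : ℝ) :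
    (∫ p in (0:ℝ)..c, F p) = c * F c - G c := by
  have hFc : Continuous F := by
    have h0 := intervalIntegral.continuous_primitive (μ := volume)
      (fun a b => hf_cont.intervalIntegrable a b) 0
    rw [funext hF]; exact h0
  have hderiv : ∀ p : ℝ, HasDerivAt (fun q => q * F q) (F p + p * f p) p := by
    intro p
    have h1 : HasDerivAt F (f p) p := by
      rw [funext hF]
      exact intervalIntegral.integral_hasDerivAt_right (hf_cont.intervalIntegrable 0 p)
        (hf_cont.stronglyMeasurableAtFilter _ _) hf_cont.continuousAt
    have := (hasDerivAt_id p).mul h1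
    exact this.congr_deriv (by simp)
  have h := intervalIntegral.integral_eq_sub_of_hasDerivAt (f := fun q => q * F q)
    (fun p _ => hderiv p) ((hFc.add ((continuous_id.mul hf_cont))).intervalIntegrable 0 c)
  have hsplit : (∫ p in (0:ℝ)..c, (F p + p * f p))
      = (∫ p in (0:ℝ)..c, F p) + ∫ p in (0:ℝ)..c, p * f p :=
    intervalIntegral.integral_add (hFc.intervalIntegrable 0 c)
      ((continuous_id.mul hf_cont).intervalIntegrable 0 c)
  rw [hsplit] at h
  rw [hG]
  have hF0 : F 0 = 0 := by rw [hF]; simp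
  linarith [h]

private lemma aux_key (f F G : ℝ → ℝ) (hf_cont : Continuous f)
    (hf_nn : ∀ p, 0 ≤ f p) (hf_nonpos : ∀ p ≤ (0:ℝ), f p = 0)
    (hF : ∀ b : ℝ, F b = ∫ p in (0 : ℝ)..b, f p)
    (hG : ∀ b : ℝ, G b = ∫ p in (0 : ℝ)..b, p * f p)
    (x : ℝ) (hx : x < 0) (B : ℝ) :
    F B + x * G B ≤ F (-1/x) + x * G (-1/x) := by
  set c : ℝ := -1/x with hc
  have hc0 : 0 < c := by have := one_div_neg.mpr hx; rw [hc, neg_div]; linarith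
  have hxc : x * c = -1 := by rw [hc]; field_simp; rw [div_self hx.ne]
  set h : ℝ → ℝ := fun p => f p + x * (p * f p) with hh
  have hhc : Continuous h := hf_cont.add (continuous_const.mul (continuous_id.mul hf_cont))
  have hrepr : ∀ b : ℝ, F b + x * G b = ∫ p in (0:ℝ)..b, h p := by
    intro b
    rw [hF, hG, ← intervalIntegral.integral_const_mul,
      ← intervalIntegral.integral_add (g := fun p => x * (p * f p)) (hf_cont.intervalIntegrable 0 b)
        ((continuous_const.mul (continuous_id'.mul hf_cont)).intervalIntegrable 0 b)]
  rw [hrepr, hrepr]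
  have hsub := intervalIntegral.integral_interval_sub_left (μ := volume) (f := h)
    (a := (0:ℝ)) (b := c) (c := B) (hhc.intervalIntegrable 0 c) (hhc.intervalIntegrable 0 B)
  have hsign : ∀ p, (p ≤ c → 0 ≤ h p) ∧ (c ≤ p → h p ≤ 0) := by
    intro p
    constructor
    · intro hp
      rcases le_or_gt p 0 with h0 | h0
      · simp [hh, hf_nonpos p h0]
      · have h1 : 0 ≤ 1 + x * p := by nlinarith
        have h2 : h p = f p * (1 + x * p) := by rw [hh]; ring
        rw [h2]; exact mul_nonneg (hf_nn p) h1
    · intro hp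
      have h1 : 1 + x * p ≤ 0 := by nlinarith
      have heq : h p = f p * (1 + x * p) := by rw [hh]; ring
      rw [heq]; exact mul_nonpos_of_nonneg_of_nonpos (hf_nn p) h1
  rcases le_or_gt B c with hBc | hBc
  · have hnn : 0 ≤ ∫ p in B..c, h p :=
      intervalIntegral.integral_nonneg hBc (fun u hu => (hsign u).1 hu.2)
    linarith
  · have h1 : (∫ p in c..B, h p) ≤ 0 := by
      have hn := intervalIntegral.integral_nonneg (f := fun p => -h p) (μ := volume) hBc.le
        (fun u hu => neg_nonneg.2 ((hsign u).2 hu.1))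
      rw [intervalIntegral.integral_neg] at hn; linarith
    have h2 : (∫ p in B..c, h p) = -∫ p in c..B, h p := intervalIntegral.integral_symm c B
    linarith

set_option maxHeartbeats 2000000 in
/-- (Theorem 1, value formula.) The fluid-limit value `ṽ(t,S)`, defined as the infimum over
all measurable controls `b : [t,T] → [0,∞)` of
`-λ ∫ₜ^T F(b(s)) ds + K min(S - λ ∫ₜ^T G(b(s)) ds, 0)²`, equals
`sup_{x ≤ 0} (S x - (T-t)H(x) - x²/(4K))`. -/
theorem stmt_11 (f F G H : ℝ → ℝ) (mbar lam : ℝ)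
    (hf_cont : Continuous f)
    (hf_nonpos : ∀ p ≤ (0 : ℝ), f p = 0)
    (hf_pos : ∀ p : ℝ, 0 < p → 0 < f p)
    (hf_int : (∫ p in Set.Ioi (0 : ℝ), f p) = 1)
    (hf_tail : Filter.Tendsto (fun p : ℝ => p ^ 3 * f p) Filter.atTop (nhds 0))
    (hmean_int : MeasureTheory.IntegrableOn (fun p : ℝ => p * f p) (Set.Ioi 0))
    (hmbar : mbar = ∫ p in Set.Ioi (0 : ℝ), p * f p)
    (hF : ∀ b : ℝ, F b = ∫ p in (0 : ℝ)..b, f p)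
    (hG : ∀ b : ℝ, G b = ∫ p in (0 : ℝ)..b, p * f p)
    (hlam : 0 < lam)
    (hHneg : ∀ x < (0 : ℝ), H x = -(lam * x) * ∫ p in (0 : ℝ)..(-1 / x), F p)
    (hHpos : ∀ x : ℝ, 0 ≤ x → H x = lam * (1 + x * mbar))
    (K t T S : ℝ) (hK : 0 < K) (ht : 0 ≤ t) (htT : t < T) :
    sInf {v : ℝ | ∃ b : ℝ → ℝ, Measurable b ∧ (∀ s, 0 ≤ b s) ∧
        v = -lam * (∫ s in t..T, F (b s))
              + K * (min (S - lam * ∫ s in t..T, G (b s)) 0) ^ 2}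
      = sSup ((fun x : ℝ => S * x - (T - t) * H x - x ^ 2 / (4 * K)) '' Set.Iic 0) := by

  have hτ : 0 < T - t := sub_pos.2 htT
  set φ : ℝ → ℝ := fun x => S * x - (T - t) * H x - x ^ 2 / (4 * K) with hφ
  set 𝒮 : Set ℝ := {v : ℝ | ∃ b : ℝ → ℝ, Measurable b ∧ (∀ s, 0 ≤ b s) ∧
        v = -lam * (∫ s in t..T, F (b s))
              + K * (min (S - lam * ∫ s in t..T, G (b s)) 0) ^ 2} with h𝒮
  -- basic facts about f, F, G
  have hf_nn : ∀ p, 0 ≤ f p := by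
    intro p
    rcases le_or_gt p 0 with h | h
    · rw [hf_nonpos p h]
    · exact (hf_pos p h).le
  have hpf_nn : ∀ p, 0 ≤ p * f p := by
    intro p
    rcases le_or_gt p 0 with h | h
    · rw [hf_nonpos p h]; simp
    · exact mul_nonneg h.le (hf_nn p)
  have hpf_cont : Continuous (fun p : ℝ => p * f p) := continuous_id.mul hf_cont
  have hfi : MeasureTheory.IntegrableOn f (Set.Ioi 0) := by
    by_contra h
    rw [MeasureTheory.integral_undef h] at hf_int
    norm_num at hf_int
  have hFc : Continuous F := by
    have h0 := intervalIntegral.continuous_primitive (μ := volume)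
      (fun a b => hf_cont.intervalIntegrable a b) 0
    rw [funext hF]; exact h0
  have hGc : Continuous G := by
    have h0 := intervalIntegral.continuous_primitive (μ := volume)
      (fun a b => hpf_cont.intervalIntegrable a b) 0
    rw [funext hG]; exact h0
  have hFmono : Monotone F := by
    intro a b hab
    rw [hF, hF]
    have h := intervalIntegral.integral_interval_sub_left (μ := volume) (f := f)
      (a := (0:ℝ)) (b := b) (c := a) (hf_cont.intervalIntegrable 0 b)
      (hf_cont.intervalIntegrable 0 a)
    have h2 : 0 ≤ ∫ p in a..b, f p :=
      intervalIntegral.integral_nonneg hab (fun u _ => hf_nn u)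
    linarith
  have hGmono : Monotone G := by
    intro a b hab
    rw [hG, hG]
    have h := intervalIntegral.integral_interval_sub_left (μ := volume)
      (f := fun p => p * f p) (a := (0:ℝ)) (b := b) (c := a)
      (hpf_cont.intervalIntegrable 0 b) (hpf_cont.intervalIntegrable 0 a)
    have h2 : 0 ≤ ∫ p in a..b, p * f p :=
      intervalIntegral.integral_nonneg hab (fun u _ => hpf_nn u)
    linarith
  have hF0 : F 0 = 0 := by rw [hF]; simp
  have hG0 : G 0 = 0 := by rw [hG]; simp
  have hF_nn : ∀ b, 0 ≤ F b := by
    intro b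
    rcases le_or_gt b 0 with h | h
    · rw [hF, intervalIntegral.integral_symm, intervalIntegral.integral_congr
        (g := fun _ => (0:ℝ)) (fun y hy => hf_nonpos y (by rw [uIcc_of_le h] at hy; exact hy.2))]
      simp
    · have := hFmono h.le; rw [hF0] at this; linarith [hFmono (le_of_lt h)]
  have hG_nn : ∀ b, 0 ≤ G b := by
    intro b
    rcases le_or_gt b 0 with h | h
    · rw [hG, intervalIntegral.integral_symm, intervalIntegral.integral_congr
        (g := fun _ => (0:ℝ)) (fun y hy => by
          rw [uIcc_of_le h] at hy
          rw [hf_nonpos y hy.2]; simp)]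
      simp
    · have h2 := hGmono h.le; rw [hG0] at h2; linarith
  have hF_le1 : ∀ b, F b ≤ 1 := by
    intro b
    rcases le_or_gt b 0 with h | h
    · have h2 := hF_nn b
      calc F b ≤ F 0 := hFmono h
        _ = 0 := hF0
        _ ≤ 1 := by norm_num
    · rw [hF, intervalIntegral.integral_of_le h.le, ← hf_int]
      exact setIntegral_mono_set hfi (Filter.Eventually.of_forall hf_nn)
        (HasSubset.Subset.eventuallyLE Ioc_subset_Ioi_self)
  have hG_le : ∀ b, G b ≤ mbar := by
    intro b
    rcases le_or_gt b 0 with h | h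
    · rw [hmbar]
      calc G b ≤ G 0 := hGmono h
        _ = 0 := hG0
        _ ≤ _ := setIntegral_nonneg measurableSet_Ioi (fun p _ => hpf_nn p)
    · rw [hG, intervalIntegral.integral_of_le h.le, hmbar]
      exact setIntegral_mono_set hmean_int (Filter.Eventually.of_forall hpf_nn)
        (HasSubset.Subset.eventuallyLE Ioc_subset_Ioi_self)
  have hmbar_nn : 0 ≤ mbar := le_trans (hG_nn 1) (hG_le 1)
  have hFtend : Filter.Tendsto F Filter.atTop (nhds 1) := by
    rw [funext hF, ← hf_int]
    exact intervalIntegral_tendsto_integral_Ioi 0 hfi tendsto_id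
  have hGtend : Filter.Tendsto G Filter.atTop (nhds mbar) := by
    rw [funext hG, hmbar]
    exact intervalIntegral_tendsto_integral_Ioi 0 hmean_int tendsto_id
  -- H in terms of F and G for x < 0
  have hHval : ∀ x < (0:ℝ), H x = lam * (F (-1/x) + x * G (-1/x)) := by
    intro x hx
    rw [hHneg x hx, aux_IBP f F G hf_cont hF hG (-1/x)]
    have hxne : x ≠ 0 := hx.ne
    field_simp
    ring
  -- key pointwise bound
  have hHbound : ∀ x ≤ (0:ℝ), ∀ B : ℝ, lam * (F B + x * G B) ≤ H x := by
    intro x hx B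
    rcases lt_or_eq_of_le hx with hx' | hx'
    · rw [hHval x hx']
      exact mul_le_mul_of_nonneg_left
        (aux_key f F G hf_cont hf_nn hf_nonpos hF hG x hx' B) hlam.le
    · subst hx'
      rw [hHpos 0 le_rfl]
      simp only [zero_mul, add_zero, mul_one]
      have := hF_le1 B
      nlinarith
  -- weak duality
  have hweak : ∀ v ∈ 𝒮, ∀ x ≤ (0:ℝ), φ x ≤ v := by
    rintro v ⟨b, hbm, hbnn, rfl⟩ x hx
    have hiF : IntervalIntegrable (fun s => F (b s)) volume t T := by
      apply IntervalIntegrable.mono_fun' (g := fun _ => (1:ℝ)) intervalIntegrable_const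
        ((hFc.measurable.comp hbm).aestronglyMeasurable)
      exact Filter.Eventually.of_forall (fun s => by
        simp only [Function.comp_apply, Real.norm_eq_abs]
        rw [abs_of_nonneg (hF_nn _)]; exact hF_le1 _)
    have hiG : IntervalIntegrable (fun s => G (b s)) volume t T := by
      apply IntervalIntegrable.mono_fun' (g := fun _ => mbar) intervalIntegrable_const
        ((hGc.measurable.comp hbm).aestronglyMeasurable)
      exact Filter.Eventually.of_forall (fun s => by
        simp only [Function.comp_apply, Real.norm_eq_abs]
        rw [abs_of_nonneg (hG_nn _)]; exact hG_le _)
    set IF := ∫ s in t..T, F (b s) with hIF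
    set IG := ∫ s in t..T, G (b s) with hIG
    have hIle : lam * IF + x * (lam * IG) ≤ (T - t) * H x := by
      have hcomb : (∫ s in t..T, (F (b s) + x * G (b s))) = IF + x * IG := by
        rw [hIF, hIG, ← intervalIntegral.integral_const_mul,
          ← intervalIntegral.integral_add hiF (hiG.const_mul x)]
      have hmono := intervalIntegral.integral_mono_on (μ := volume) htT.le
        (hiF.add (hiG.const_mul x)) (intervalIntegrable_const (c := H x / lam))
        (fun s _ => by
          rw [le_div_iff₀ hlam]
          have := hHbound x hx (b s)
          linarith)
      rw [hcomb, intervalIntegral.integral_const, smul_eq_mul] at hmono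
      have h2 := mul_le_mul_of_nonneg_left hmono hlam.le
      have h3 : lam * ((T - t) * (H x / lam)) = (T - t) * H x := by
        field_simp
      rw [h3] at h2
      linarith [h2, (by ring : lam * (IF + x * IG) = lam * IF + x * (lam * IG))]
    have hquad := aux_quad K x (S - lam * IG) hK hx
    simp only [hφ]
    nlinarith [hquad, hIle]
  -- constant controls are admissible
  have hconstmem : ∀ B : ℝ, 0 ≤ B →
      (-lam * ((T - t) * F B) + K * (min (S - lam * ((T - t) * G B)) 0) ^ 2) ∈ 𝒮 := by
    intro B hB
    refine ⟨fun _ => B, measurable_const, fun _ => hB, ?_⟩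
    rw [intervalIntegral.integral_const, intervalIntegral.integral_const, smul_eq_mul, smul_eq_mul]
  have hne : 𝒮.Nonempty := ⟨_, hconstmem 0 le_rfl⟩
  obtain ⟨v₀, hv₀⟩ := hne
  have hbddB : BddBelow 𝒮 := ⟨φ 0, fun v hv => hweak v hv 0 le_rfl⟩
  have himgne : (φ '' Set.Iic 0).Nonempty := ⟨φ 0, 0, by simp, rfl⟩
  have hbddA : BddAbove (φ '' Set.Iic 0) := by
    refine ⟨v₀, ?_⟩
    rintro y ⟨x, hx, rfl⟩
    exact hweak v₀ hv₀ x hx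
  apply le_antisymm
  · -- sInf ≤ sSup
    rcases le_or_gt (lam * ((T - t) * mbar)) S with h2 | h2
    · -- large S: near-optimal x is 0
      have hφ0 : φ 0 = -((T - t) * lam) := by
        simp only [hφ]; rw [hHpos 0 le_rfl]; ring
      refine le_trans ?_ (le_csSup hbddA ⟨0, by simp, rfl⟩)
      apply le_of_forall_pos_le_add
      intro ε hε
      set δ := ε / (lam * (T - t)) with hδ
      have hδpos : 0 < δ := by positivity
      have hδε : lam * (T - t) * δ = ε := by rw [hδ]; field_simp
      obtain ⟨B, hFB, hB0⟩ := ((hFtend.eventually (eventually_gt_nhds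
        (show 1 - δ < 1 by linarith))).and (eventually_ge_atTop (0:ℝ))).exists
      have hmem := hconstmem B hB0
      have hminz : min (S - lam * ((T - t) * G B)) 0 = 0 := by
        apply min_eq_right
        have h3 := hG_le B
        nlinarith
      rw [hminz] at hmem
      have hle := csInf_le hbddB hmem
      rw [hφ0]
      have h4 := mul_le_mul_of_nonneg_left hFB.le
        (show (0:ℝ) ≤ lam * (T - t) by positivity)
      nlinarith [hle]
    · -- small S: optimal interior x via IVT
      set L := lam * (T - t) with hL
      have hLpos : 0 < L := by rw [hL]; positivity
      have h2K : (0:ℝ) < 2 * K := by linarith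
      set D : ℝ → ℝ := fun x => S - L * G (-1/x) - x/(2*K) with hD
      set δ := (lam * ((T - t) * mbar) - S)/2 with hδ
      have hδpos : 0 < δ := by rw [hδ]; linarith
      obtain ⟨B₀, hGB₀, hB₀1⟩ := ((hGtend.eventually (eventually_gt_nhds
        (show mbar - δ/L < mbar by
          have : 0 < δ/L := by positivity
          linarith))).and (eventually_ge_atTop (1:ℝ))).exists
      have hB₀pos : (0:ℝ) < B₀ := lt_of_lt_of_le one_pos hB₀1
      set x₁ := min (-1) (2*K*(S - L*mbar - 1)) with hx₁
      set x₂ := max (-1/B₀) (-(K*δ)) with hx₂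
      have hx₂neg : x₂ < 0 := by
        apply max_lt
        · have : 0 < 1/B₀ := by positivity
          rw [neg_div]; linarith
        · nlinarith
      have hx₂ge : -1 ≤ x₂ := by
        refine le_trans ?_ (le_max_left _ _)
        rw [neg_div, neg_le_neg_iff]
        rw [div_le_one hB₀pos]
        exact hB₀1
      have hx₁₂ : x₁ ≤ x₂ := le_trans (min_le_left _ _) hx₂ge
      have hDx₁ : 0 ≤ D x₁ := by
        have hdiv : x₁/(2*K) ≤ S - L*mbar - 1 := by
          rw [div_le_iff₀ h2K]
          nlinarith [min_le_right (-1) (2*K*(S - L*mbar - 1))]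
        have hGle := mul_le_mul_of_nonneg_left (hG_le (-1/x₁)) hLpos.le
        simp only [hD]
        linarith
      have hDx₂ : D x₂ ≤ 0 := by
        have hc₂ : B₀ ≤ -1/x₂ := by
          rw [neg_div, le_neg, div_le_iff_of_neg hx₂neg]
          have h5 := (div_le_iff₀ hB₀pos).mp (le_max_left (-1/B₀) (-(K*δ)))
          nlinarith [h5]
        have hGc₂ : mbar - δ/L < G (-1/x₂) := lt_of_lt_of_le hGB₀ (hGmono hc₂)
        have h3 := mul_le_mul_of_nonneg_left hGc₂.le hLpos.le
        have e1 : L*(mbar - δ/L) = L*mbar - δ := by field_simp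
        have e3 : L*mbar = lam*((T - t)*mbar) := by rw [hL]; ring
        have hx2div : -(δ/2) ≤ x₂/(2*K) := by
          have h6 : -(K*δ) ≤ x₂ := le_max_right (-1/B₀) (-(K*δ))
          have h7 : -(K*δ)/(2*K) ≤ x₂/(2*K) := by gcongr
          have e2 : -(K*δ)/(2*K) = -(δ/2) := by field_simp
          linarith
        simp only [hD]
        linarith
      have hne0 : ∀ x ∈ Set.Icc x₁ x₂, x ≠ (0:ℝ) :=
        fun x hx => (lt_of_le_of_lt hx.2 hx₂neg).ne
      have hDcont : ContinuousOn D (Set.Icc x₁ x₂) := by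
        apply ContinuousOn.sub
        · apply ContinuousOn.sub continuousOn_const
          exact continuousOn_const.mul (hGc.comp_continuousOn
            (ContinuousOn.div continuousOn_const continuousOn_id hne0))
        · exact continuousOn_id.div_const _
      obtain ⟨xs, hxsmem, hDxs⟩ := intermediate_value_Icc' hx₁₂ hDcont
        (show (0:ℝ) ∈ Set.Icc (D x₂) (D x₁) from ⟨hDx₂, hDx₁⟩)
      have hxsneg : xs < 0 := lt_of_le_of_lt hxsmem.2 hx₂neg
      have hBspos : (0:ℝ) < -1/xs := by
        have := one_div_neg.mpr hxsneg
        rw [neg_div]; linarith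
      have hstar : S - lam * ((T - t) * G (-1/xs)) = xs/(2*K) := by
        have h7 : D xs = 0 := hDxs
        simp only [hD] at h7
        have h8 : lam*((T - t)*G (-1/xs)) = L * G (-1/xs) := by rw [hL]; ring
        linarith
      have hmin : min (S - lam*((T - t)*G (-1/xs))) 0 = xs/(2*K) := by
        rw [hstar]
        exact min_eq_left (div_nonpos_of_nonpos_of_nonneg hxsneg.le (by linarith))
      have hmem := hconstmem (-1/xs) hBspos.le
      rw [hmin] at hmem
      have hveq : -lam*((T - t)*F (-1/xs)) + K*(xs/(2*K))^2 = φ xs := by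
        simp only [hφ]
        rw [hHval xs hxsneg]
        have hS : S = xs/(2*K) + lam*((T - t)*G (-1/xs)) := by linarith
        rw [hS]
        field_simp
        ring
      calc sInf 𝒮 ≤ -lam*((T - t)*F (-1/xs)) + K*(xs/(2*K))^2 := csInf_le hbddB hmem
        _ = φ xs := hveq
        _ ≤ sSup (φ '' Set.Iic 0) := le_csSup hbddA ⟨xs, hxsneg.le, rfl⟩
  · -- sSup ≤ sInf
    apply le_csInf ⟨v₀, hv₀⟩
    intro v hv
    apply csSup_le himgne
    rintro y ⟨x, hx, rfl⟩
    exact hweak v hv x hx
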